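/- If ρ ∈ M₃(ℂ) is positive semidefinite and Trace(ρ·𝓛(x)) = 0 for all x ∈ M₃(ℂ), then ρ·e₃ = 0, where e₃ is the third standard basis vector of ℂ³; hence every invariant state of the semigroup generated by 𝓛 is supported on span{e₁, e₂} and there is no faithful (positive definite) invariant state. -/

import Mathlib

open Matrix
open scoped ComplexOrder

noncomputable section

/-- The standard matrix units `E i j` of `M₃(ℂ)` (with indices `0,1,2` for `1,2,3`). -/
def E (i j : Fin 3) : Matrix (Fin 3) (Fin 3) ℂ := Matrix.single i j 1

/-- `G = (−(γ₁+γ₂)/2 + iκ)•E₃₃`. -/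
def G (γ₁ γ₂ κ : ℝ) : Matrix (Fin 3) (Fin 3) ℂ :=
  ((-(γ₁ + γ₂) / 2 : ℂ) + Complex.I * (κ : ℂ)) • E 2 2

/-- `L₁ = √γ₁•E₁₃`. -/
def L₁ (γ₁ : ℝ) : Matrix (Fin 3) (Fin 3) ℂ := (Real.sqrt γ₁ : ℂ) • E 0 2

/-- `L₂ = √γ₂•E₂₃`. -/
def L₂ (γ₂ : ℝ) : Matrix (Fin 3) (Fin 3) ℂ := (Real.sqrt γ₂ : ℂ) • E 1 2

/-- The generator `𝓛(x) = Gᴴx + L₁ᴴxL₁ + L₂ᴴxL₂ + xG` of the generic QMS. -/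
def gen (γ₁ γ₂ κ : ℝ) (x : Matrix (Fin 3) (Fin 3) ℂ) : Matrix (Fin 3) (Fin 3) ℂ :=
  (G γ₁ γ₂ κ)ᴴ * x + (L₁ γ₁)ᴴ * x * L₁ γ₁ + (L₂ γ₂)ᴴ * x * L₂ γ₂ + x * G γ₁ γ₂ κ

theorem invariant_states_not_faithful (γ₁ γ₂ κ : ℝ) (hγ₁ : 0 < γ₁) (hγ₂ : 0 < γ₂)
    (ρ : Matrix (Fin 3) (Fin 3) ℂ) (hρ : ρ.PosSemidef)
    (hinv : ∀ x : Matrix (Fin 3) (Fin 3) ℂ, (ρ * gen γ₁ γ₂ κ x).trace = 0) :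
    ρ *ᵥ (Pi.single (2 : Fin 3) (1 : ℂ)) = 0 ∧ ¬ ρ.PosDef := by
  have h0 := hinv (E 0 0)
  have hρ22 : ρ 2 2 = 0 := by
    have : (γ₁ : ℂ) * ρ 2 2 = 0 := by
      rw [← h0]
      simp [gen, G, L₁, L₂, E, trace, mul_apply, Fin.sum_univ_three, Matrix.single,
        Matrix.conjTranspose_apply, diag]
      rw [← Complex.ofReal_mul, Real.mul_self_sqrt hγ₁.le]; ring
    rcases mul_eq_zero.mp this with h | h
    · exact absurd h (by exact_mod_cast hγ₁.ne')
    · exact h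
  have key : ρ *ᵥ (Pi.single (2 : Fin 3) (1 : ℂ)) = 0 := by
    rw [← (hρ.dotProduct_mulVec_zero_iff (Pi.single 2 1))]
    simp [dotProduct, mulVec, Fin.sum_univ_three, Pi.single_apply, hρ22]
  refine ⟨key, fun hpd => ?_⟩
  have := hpd.dotProduct_mulVec_pos (x := Pi.single 2 1) (by intro h; simpa using congrFun h 2)
  rw [key] at this
  simp at this

end
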